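/- Let n ≥ 1 and m = 2n−1. Consider the boundary conditions y^{(k)}(0) = 0 and y^{(k)}(1) = 0 for k = n, n+1, …, 2n−2, together with y^{(n−1)}(1) = 0 (in total 2n−1 conditions). Then: (a) for every (2n−1) times continuously differentiable y : [0,1] → ℂ satisfying these conditions, 2·Im(∫₀¹ (−1)^n·i·y^{(2n−1)}(x)·conj(y(x)) dx) = |y^{(n−1)}(0)|², so the conditions are dissipative; (b) for the normalized system with orders k_1 = k_2 = 2n−2, k_3 = k_4 = 2n−3, …, k_{2n−3} = k_{2n−2} = n, k_{2n−1} = n−1 and leading pairs (α_{2l−1}, β_{2l−1}) = (1,0), (α_{2l}, β_{2l}) = (0,1) for l = 1,…,n−1 and (α_{2n−1}, β_{2n−1}) = (0,1), one has θ_0 = 0, where θ_0 = det(D(0)) and D(s) is the (2n−1)×(2n−1) matrix whose (j,i) entry equals α_j·ω_i^{k_j} for 1 ≤ i ≤ n−1, (α_j + s·β_j)·ω_n^{k_j} for i = n, and β_j·ω_i^{k_j} for n+1 ≤ i ≤ 2n−1. Consequently these dissipative boundary conditions are not Birkhoff regular. -/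

import Mathlib

open Finset MeasureTheory

private lemma stmt19_idx {n : ℕ} (m : ℕ) (hm : m + 1 ≤ 2 * n) :
    (m : WithTop ℕ∞) ≤ 2 * (n : WithTop ℕ∞) - 1 := by
  have h : (((2 * n - 1 : ℕ)) : WithTop ℕ∞) = 2 * (n : WithTop ℕ∞) - 1 := rfl
  rw [← h]
  exact_mod_cast (by omega : m ≤ 2 * n - 1)

private lemma stmt19a (n : ℕ) (hn : 1 ≤ n) (y : ℝ → ℂ) (hy : ContDiff ℝ (2 * n - 1) y)
    (hbc : ∀ k : ℕ, n ≤ k → k ≤ 2 * n - 2 →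
        iteratedDeriv k y 0 = 0 ∧ iteratedDeriv k y 1 = 0)
    (h1 : iteratedDeriv (n - 1) y 1 = 0) :
    2 * (∫ x in (0:ℝ)..1,
          (-1 : ℂ) ^ n * Complex.I * iteratedDeriv (2 * n - 1) y x
            * (starRingEnd ℂ) (y x)).im
        = ‖iteratedDeriv (n - 1) y 0‖ ^ 2 := by
  have hD : ∀ j : ℕ, j + 2 ≤ 2 * n → ∀ x : ℝ,
      HasDerivAt (iteratedDeriv j y) (iteratedDeriv (j + 1) y x) x := by
    intro j hj x
    have hcast : ((j : WithTop ℕ∞)) < 2 * (n : WithTop ℕ∞) - 1 := by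
      refine lt_of_lt_of_le ?_ (stmt19_idx (j + 1) (by omega))
      exact_mod_cast Nat.lt_succ_self j
    have hd : Differentiable ℝ (iteratedDeriv j y) :=
      hy.differentiable_iteratedDeriv j hcast
    rw [iteratedDeriv_succ]
    exact (hd x).hasDerivAt
  have hC : ∀ m : ℕ, m ≤ 2 * n - 1 → Continuous (iteratedDeriv m y) := fun m hm =>
    hy.continuous_iteratedDeriv m (stmt19_idx m (by omega))
  set A : ℝ → ℂ := fun x => iteratedDeriv (2 * n - 1) y x * (starRingEnd ℂ) (y x) with hA
  set f : ℕ → ℝ → ℂ := fun j x =>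
    (-1 : ℂ) ^ j * (iteratedDeriv (2 * n - 1 - j) y x
      * (starRingEnd ℂ) (iteratedDeriv j y x)) with hf
  set g : ℝ → ℂ := fun x => ∑ j ∈ range (2 * n - 1),
    (-1 : ℂ) ^ j * (iteratedDeriv (2 * n - 2 - j) y x
      * (starRingEnd ℂ) (iteratedDeriv j y x)) with hg
  have hodd : Odd (2 * n - 1) := ⟨n - 1, by omega⟩
  have hgderiv : ∀ x : ℝ, HasDerivAt g (((2 * (A x).re : ℝ) : ℂ)) x := by
    intro x
    have hterm : ∀ j ∈ range (2 * n - 1), HasDerivAt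
        (fun x => (-1 : ℂ) ^ j * (iteratedDeriv (2 * n - 2 - j) y x
          * (starRingEnd ℂ) (iteratedDeriv j y x)))
        (f j x - f (j + 1) x) x := by
      intro j hj
      rw [mem_range] at hj
      have hd1 := hD (2 * n - 2 - j) (by omega) x
      have hd2 := (hD j (by omega) x).star
      have hmul := (hd1.mul hd2).const_mul ((-1 : ℂ) ^ j)
      have e1 : 2 * n - 2 - j + 1 = 2 * n - 1 - j := by omega
      have e2 : 2 * n - 1 - (j + 1) = 2 * n - 2 - j := by omega
      refine hmul.congr_deriv ?_
      simp only [hf, e1, e2, pow_succ, starRingEnd_apply]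
      ring
    have hsum := HasDerivAt.sum hterm
    rw [show (∑ i ∈ range (2 * n - 1), (f i x - f (i + 1) x))
        = f 0 x - f (2 * n - 1) x from Finset.sum_range_sub' (fun i => f i x) (2 * n - 1)]
      at hsum
    have hval : f 0 x - f (2 * n - 1) x = A x + (starRingEnd ℂ) (A x) := by
      simp only [hf, hA, pow_zero, one_mul, Nat.sub_zero, Nat.sub_self,
        iteratedDeriv_zero, hodd.neg_one_pow, map_mul, Complex.conj_conj]
      ring
    rw [hval, Complex.add_conj] at hsum
    rw [Finset.sum_fn] at hsum
    exact hsum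
  have hAc : Continuous A := by
    rw [hA]
    exact ((hC _ le_rfl).mul (Complex.continuous_conj.comp hy.continuous))
  have hFTC : (∫ x in (0:ℝ)..1, ((2 * (A x).re : ℝ) : ℂ)) = g 1 - g 0 := by
    refine intervalIntegral.integral_eq_sub_of_hasDerivAt (fun x _ => hgderiv x) ?_
    exact (Complex.continuous_ofReal.comp
      ((continuous_const.mul (Complex.continuous_re.comp hAc)))).intervalIntegrable 0 1
  rw [intervalIntegral.integral_ofReal] at hFTC
  have hre : (∫ x in (0:ℝ)..1, (A x).re) = ((g 1 - g 0).re) / 2 := by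
    have h2 := congrArg Complex.re hFTC
    rw [Complex.ofReal_re, intervalIntegral.integral_const_mul] at h2
    linarith
  have hcast : ((-1 : ℂ)) ^ n = (((-1 : ℝ) ^ n : ℝ) : ℂ) := by push_cast; ring
  have hintA : IntervalIntegrable (fun x => ((-1 : ℂ) ^ n * Complex.I) * A x) volume 0 1 :=
    (continuous_const.mul hAc).intervalIntegrable 0 1
  have hIm : (∫ x in (0:ℝ)..1, (-1 : ℂ) ^ n * Complex.I * iteratedDeriv (2 * n - 1) y x
        * (starRingEnd ℂ) (y x)).im
      = (-1 : ℝ) ^ n * ∫ x in (0:ℝ)..1, (A x).re := by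
    have hrw : (∫ x in (0:ℝ)..1, (-1 : ℂ) ^ n * Complex.I * iteratedDeriv (2 * n - 1) y x
        * (starRingEnd ℂ) (y x)) = ∫ x in (0:ℝ)..1, ((-1 : ℂ) ^ n * Complex.I) * A x := by
      simp only [hA, mul_assoc]
    rw [hrw, ← Complex.imCLM_apply,
      ← ContinuousLinearMap.intervalIntegral_comp_comm _ hintA,
      ← intervalIntegral.integral_const_mul]
    refine intervalIntegral.integral_congr fun x _ => ?_
    simp only [Complex.imCLM_apply, hcast, Complex.mul_im, Complex.mul_re,
      Complex.ofReal_re, Complex.ofReal_im, Complex.I_re, Complex.I_im]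
    ring
  have hg1 : g 1 = 0 := by
    rw [hg]
    apply Finset.sum_eq_zero
    intro j hj
    rw [mem_range] at hj
    rcases lt_or_ge j (n - 1) with h | h
    · have hz : iteratedDeriv (2 * n - 2 - j) y 1 = 0 := (hbc _ (by omega) (by omega)).2
      simp [hz]
    · have hz : iteratedDeriv j y 1 = 0 := by
        rcases eq_or_lt_of_le h with rfl | h'
        · exact h1
        · exact (hbc _ (by omega) (by omega)).2
      simp [hz]
  have hg0 : g 0 = (-1 : ℂ) ^ (n - 1) *
      (iteratedDeriv (n - 1) y 0 * (starRingEnd ℂ) (iteratedDeriv (n - 1) y 0)) := by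
    have hg0' : g 0 = ∑ j ∈ range (2 * n - 1), (-1 : ℂ) ^ j *
        (iteratedDeriv (2 * n - 2 - j) y 0 * (starRingEnd ℂ) (iteratedDeriv j y 0)) := rfl
    rw [hg0', Finset.sum_eq_single_of_mem (n - 1) (by rw [mem_range]; omega)]
    · rw [show 2 * n - 2 - (n - 1) = n - 1 from by omega]
    · intro j hj hne
      rw [mem_range] at hj
      rcases lt_or_ge j (n - 1) with h | h
      · have hz : iteratedDeriv (2 * n - 2 - j) y 0 = 0 := (hbc _ (by omega) (by omega)).1
        simp [hz]
      · have h' : n - 1 < j := lt_of_le_of_ne h (Ne.symm hne)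
        have hz : iteratedDeriv j y 0 = 0 := (hbc _ (by omega) (by omega)).1
        simp [hz]
  have hcast' : ((-1 : ℂ)) ^ (n - 1) = (((-1 : ℝ) ^ (n - 1) : ℝ) : ℂ) := by push_cast; ring
  rw [hIm, hre, hg1, hg0, Complex.mul_conj, hcast', Complex.sq_norm]
  simp only [zero_sub, Complex.neg_re, Complex.ofReal_mul, Complex.mul_re,
    Complex.ofReal_re, Complex.ofReal_im, mul_zero, zero_mul, sub_zero]
  rcases Nat.even_or_odd n with he | ho
  · have ho' : Odd (n - 1) := by
      obtain ⟨t, ht⟩ := he; exact ⟨t - 1, by omega⟩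
    rw [he.neg_one_pow, ho'.neg_one_pow]; ring
  · have he' : Even (n - 1) := by
      obtain ⟨t, ht⟩ := ho; exact ⟨t, by omega⟩
    rw [ho.neg_one_pow, he'.neg_one_pow]; ring


private lemma stmt19b (n : ℕ) (hn : 1 ≤ n) (ω : Fin (2 * n - 1) → ℂ) :
    (Matrix.of fun j i : Fin (2 * n - 1) =>
        (if (i : ℕ) < n then
          (if (j : ℕ) = 2 * n - 2 then (0 : ℂ) else if (j : ℕ) % 2 = 0 then 1 else 0)
         else
          (if (j : ℕ) = 2 * n - 2 then (1 : ℂ) else if (j : ℕ) % 2 = 0 then 0 else 1))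
        * ω i ^ (2 * n - 2 - (j : ℕ) / 2)).det = 0 := by
  classical
  rw [← Matrix.exists_mulVec_eq_zero_iff]
  have hle : n ≤ 2 * n - 1 := by omega
  set B : Matrix (Fin (n - 1)) (Fin n) ℂ :=
    Matrix.of fun r i => ω (Fin.castLE hle i) ^ (2 * n - 2 - (r : ℕ)) with hB
  have hni : ¬ Function.Injective B.mulVecLin := by
    intro hinj
    have h2 := LinearMap.finrank_le_finrank_of_injective hinj
    rw [Module.finrank_fintype_fun_eq_card, Module.finrank_fintype_fun_eq_card,
      Fintype.card_fin, Fintype.card_fin] at h2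
    omega
  obtain ⟨a, b, hab, hne⟩ := Function.not_injective_iff.mp hni
  set u : Fin n → ℂ := a - b with hu
  have hu0 : u ≠ 0 := sub_ne_zero.mpr hne
  have hBu : B.mulVec u = 0 := by
    have : B.mulVecLin u = 0 := by rw [hu, map_sub, hab, sub_self]
    simpa [Matrix.mulVecLin_apply] using this
  set v : Fin (2 * n - 1) → ℂ := fun i => if h : (i : ℕ) < n then u ⟨i, h⟩ else 0 with hv
  refine ⟨v, ?_, ?_⟩
  · obtain ⟨i₀, hi₀⟩ := Function.ne_iff.mp hu0
    intro hv0
    apply hi₀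
    have := congrFun hv0 (Fin.castLE hle i₀)
    simpa [hv, i₀.isLt] using this
  · funext j
    simp only [Matrix.mulVec, dotProduct, Matrix.of_apply, Pi.zero_apply]
    by_cases hj2 : (j : ℕ) = 2 * n - 2 ∨ (j : ℕ) % 2 = 1
    · apply Finset.sum_eq_zero
      intro i _
      by_cases hi : (i : ℕ) < n
      · rcases hj2 with h | h
        · simp [hi, h]
        · simp [hi, Nat.mod_two_ne_zero.mpr h]
      · simp [hv, hi]
    · push_neg at hj2
      obtain ⟨hjne, hjodd⟩ := hj2
      have hjeven : (j : ℕ) % 2 = 0 := by omega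
      have hjlt : (j : ℕ) < 2 * n - 2 := by
        have := j.isLt; omega
      have hr : (j : ℕ) / 2 < n - 1 := by omega
      have key : ∑ i : Fin (2 * n - 1),
          (if (i : ℕ) < n then
            (if (j : ℕ) = 2 * n - 2 then (0 : ℂ) else if (j : ℕ) % 2 = 0 then 1 else 0)
           else
            (if (j : ℕ) = 2 * n - 2 then (1 : ℂ) else if (j : ℕ) % 2 = 0 then 0 else 1))
            * ω i ^ (2 * n - 2 - (j : ℕ) / 2) * v i
          = B.mulVec u ⟨(j : ℕ) / 2, hr⟩ := by
        rw [Matrix.mulVec, dotProduct]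
        rw [← Finset.sum_subset (Finset.subset_univ ((univ : Finset (Fin n)).map (Fin.castLEEmb hle)))]
        · rw [Finset.sum_map]
          apply Finset.sum_congr rfl
          intro i' _
          have hlt : ((Fin.castLEEmb hle i' : Fin (2*n-1)) : ℕ) < n := i'.isLt
          simp only [Fin.castLEEmb_apply] at hlt ⊢
          simp only [hv, hB, Matrix.of_apply, dif_pos hlt, if_pos hlt, if_neg hjne,
            if_pos hjeven, one_mul, Fin.eta]
          exact congrArg _ (congrArg u (Fin.ext rfl))
        · intro x _ hx
          have hxn : ¬ (x : ℕ) < n := by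
            intro hxn
            apply hx
            simp only [Finset.mem_map, Finset.mem_univ, true_and]
            exact ⟨⟨(x : ℕ), hxn⟩, Fin.ext rfl⟩
          simp [hv, hxn]
      rw [key, hBu]
      rfl

/-- an example of dissipative boundary conditions of odd order
`m = 2n−1` that are not Birkhoff regular.  The conditions are
`y^{(k)}(0) = y^{(k)}(1) = 0` for `n ≤ k ≤ 2n−2`, together with `y^{(n−1)}(1) = 0`.
Part (a): for every admissible `y`,
`2·Im(∫₀¹ (−1)^n i y^{(2n−1)}·conj(y)) = |y^{(n−1)}(0)|²` (so they are dissipative).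
Part (b): for the corresponding normalized system — orders `k_j = 2n−2−⌊j/2⌋`
(0-indexed rows `j`) and leading pairs `(1,0)` for even `j < 2n−2`, `(0,1)` for odd
`j` and for the last row `j = 2n−2` — one has `θ_0 = det D(0) = 0`, where `ω_i` are
the `(2n−1)`-th roots of `−1` enumerated with `Re(ω_i e^{iπ/(2(2n−1))})` strictly
increasing, and `D(0)` has `(j,i)` entry `α_j ω_i^{k_j}` for columns `i < n` and
`β_j ω_i^{k_j}` for columns `i ≥ n` (0-indexed).  Hence these dissipative conditions
are not Birkhoff regular. -/
theorem stmt19 (n : ℕ) (hn : 1 ≤ n)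
    (ω : Fin (2 * n - 1) → ℂ) (hω : ∀ i, ω i ^ (2 * n - 1) = -1)
    (hmono : StrictMono fun i =>
      (ω i * Complex.exp ((Real.pi : ℂ) * Complex.I / (2 * (2 * (n : ℂ) - 1)))).re) :
    (∀ y : ℝ → ℂ, ContDiff ℝ (2 * n - 1) y →
      (∀ k : ℕ, n ≤ k → k ≤ 2 * n - 2 →
        iteratedDeriv k y 0 = 0 ∧ iteratedDeriv k y 1 = 0) →
      iteratedDeriv (n - 1) y 1 = 0 →
      2 * (∫ x in (0:ℝ)..1,
          (-1 : ℂ) ^ n * Complex.I * iteratedDeriv (2 * n - 1) y x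
            * (starRingEnd ℂ) (y x)).im
        = ‖iteratedDeriv (n - 1) y 0‖ ^ 2)
    ∧
    (Matrix.of fun j i : Fin (2 * n - 1) =>
        (if (i : ℕ) < n then
          (if (j : ℕ) = 2 * n - 2 then (0 : ℂ) else if (j : ℕ) % 2 = 0 then 1 else 0)
         else
          (if (j : ℕ) = 2 * n - 2 then (1 : ℂ) else if (j : ℕ) % 2 = 0 then 0 else 1))
        * ω i ^ (2 * n - 2 - (j : ℕ) / 2)).det = 0 := by
  exact ⟨fun y hy hbc h1 => stmt19a n hn y hy hbc h1, stmt19b n hn ω⟩
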